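/- For all integers m, p, n with 1 ≤ m ≤ p ≤ n and m + 1 ≤ n, one has R_m(p,n) ≤ C(p,m) · C(n, m+1) · R_m(m, m+1), where C(p,m) and C(n, m+1) are binomial coefficients. -/

import Mathlib

open scoped Classical

noncomputable section

/-- The `{±1}`-vector in `ℝ^n` encoded by a Boolean vector. -/
def signVec {n : ℕ} (u : Fin n → Bool) : Fin n → ℝ := fun i => if u i then 1 else -1

/-- `v` is a `{±1}`-vector: all coordinates lie in `{-1, 1}`. -/
def IsPM {n : ℕ} (v : Fin n → ℝ) : Prop := ∀ i, v i = 1 ∨ v i = -1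

/-- The real span of the `{±1}`-vectors encoded by `W` contains a `{±1}`-vector different
from `±(W j)` for all `j`. -/
def KSOEvent {p n : ℕ} (W : Fin p → Fin n → Bool) : Prop :=
  ∃ x : Fin n → ℝ,
    x ∈ Submodule.span ℝ (Set.range fun j => signVec (W j)) ∧ IsPM x ∧
    ∀ j, x ≠ signVec (W j) ∧ x ≠ -signVec (W j)

/-- `ℙ(p, n)`: the probability that the real span of `p` uniformly random `{±1}`-vectors
in `ℝ^n` contains a `{±1}`-vector different from `±v_1, …, ±v_p`. -/
def probKSO (p n : ℕ) : ℝ :=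
  ((Finset.univ.filter fun W : Fin p → Fin n → Bool => KSOEvent W).card : ℝ) / 2 ^ (p * n)

/-- Some three of the vectors encoded by `W` have a real linear combination that is a
`{±1}`-vector different from `±` those three vectors. -/
def P3Event {p n : ℕ} (W : Fin p → Fin n → Bool) : Prop :=
  ∃ j₁ j₂ j₃ : Fin p, j₁ ≠ j₂ ∧ j₁ ≠ j₃ ∧ j₂ ≠ j₃ ∧
    ∃ a b c : ℝ, ∃ x : Fin n → ℝ,
      x = a • signVec (W j₁) + b • signVec (W j₂) + c • signVec (W j₃) ∧ IsPM x ∧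
      (x ≠ signVec (W j₁) ∧ x ≠ -signVec (W j₁)) ∧
      (x ≠ signVec (W j₂) ∧ x ≠ -signVec (W j₂)) ∧
      (x ≠ signVec (W j₃) ∧ x ≠ -signVec (W j₃))

/-- `ℙ₃(p, n)`: the probability of `P3Event` for `p` uniformly random `{±1}`-vectors in `ℝ^n`. -/
def probP3 (p n : ℕ) : ℝ :=
  ((Finset.univ.filter fun W : Fin p → Fin n → Bool => P3Event W).card : ℝ) / 2 ^ (p * n)

/-- Some `m` of the vectors encoded by `W` have a linear combination with all coefficients
nonzero that is a `{±1}`-vector. -/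
def PmEvent (m : ℕ) {p n : ℕ} (W : Fin p → Fin n → Bool) : Prop :=
  ∃ j : Fin m → Fin p, Function.Injective j ∧
    ∃ α : Fin m → ℝ, (∀ i, α i ≠ 0) ∧ IsPM (∑ i, α i • signVec (W (j i)))

/-- `ℙ_m(p, n)`: the probability of `PmEvent m` for `p` uniformly random `{±1}`-vectors
in `ℝ^n`. -/
def probPm (m p n : ℕ) : ℝ :=
  ((Finset.univ.filter fun W : Fin p → Fin n → Bool => PmEvent m W).card : ℝ) / 2 ^ (p * n)

/-- `𝓜_m(p, n)`: the set of `p × n` `{±1}`-matrices (encoded row-wise by Booleans) with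
linearly independent rows, some `m` of which have a linear combination with nonzero
coefficients that is a `{±1}`-vector. -/
def MmSet (m p n : ℕ) : Finset (Fin p → Fin n → Bool) :=
  Finset.univ.filter fun M =>
    (LinearIndependent ℝ fun i => signVec (M i)) ∧ PmEvent m M

/-- `R_m(p, n) = |𝓜_m(p, n)| / 2^(p n)`. -/
def Rm (m p n : ℕ) : ℝ := ((MmSet m p n).card : ℝ) / 2 ^ (p * n)

/-- `ℙ_{p,n}`: the probability that a uniformly random `p × n` `{±1}`-matrix has rank
less than `p`, i.e. its rows are linearly dependent over `ℝ`. -/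
def probSingular (p n : ℕ) : ℝ :=
  ((Finset.univ.filter fun M : Fin p → Fin n → Bool =>
      ¬ LinearIndependent ℝ fun i => signVec (M i)).card : ℝ) / 2 ^ (p * n)

/-- The vector `(1, b_1, …, b_n) ∈ E_n ⊂ ℝ^{n+1}` encoded by a Boolean vector. -/
def eVec {n : ℕ} (u : Fin n → Bool) : Fin (n + 1) → ℝ := Fin.cons 1 (signVec u)

/-- The number of ordered `n`-tuples of distinct, linearly independent vectors from `E_n`
whose real span contains a `{±1}`-vector of `ℝ^{n+1}` different from `±w_1, …, ±w_n`. -/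
def KSOECard (n : ℕ) : ℕ :=
  (Finset.univ.filter fun W : Fin n → (Fin n → Bool) =>
    Function.Injective W ∧ (LinearIndependent ℝ fun i => eVec (W i)) ∧
    ∃ x : Fin (n + 1) → ℝ,
      x ∈ Submodule.span ℝ (Set.range fun i => eVec (W i)) ∧ IsPM x ∧
      ∀ i, x ≠ eVec (W i) ∧ x ≠ -eVec (W i)).card

/-- `P(2, n)`: the number of threshold functions of `n` variables. -/
def numThreshold (n : ℕ) : ℕ :=
  (Finset.univ.filter fun f : (Fin n → Bool) → Bool =>
    ∃ a : ℝ, ∃ w : Fin n → ℝ,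
      ∀ x, f x = true ↔ 0 < a + ∑ i, w i * signVec x i).card


lemma emb_symm {α : Type*} [LinearOrder α] (s : Finset α) {k : ℕ} (h : s.card = k)
    (i : α) (hi : i ∈ s) :
    s.orderEmbOfFin h ((s.orderIsoOfFin h).symm ⟨i, hi⟩) = i := by
  rw [← Finset.coe_orderIsoOfFin_apply, OrderIso.apply_symm_apply]

lemma symm_emb {α : Type*} [LinearOrder α] (s : Finset α) {k : ℕ} (h : s.card = k)
    (i : Fin k) (hmem : s.orderEmbOfFin h i ∈ s) :
    (s.orderIsoOfFin h).symm ⟨s.orderEmbOfFin h i, hmem⟩ = i := by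
  have : (⟨s.orderEmbOfFin h i, hmem⟩ : {x // x ∈ s}) = s.orderIsoOfFin h i :=
    Subtype.ext (Finset.coe_orderIsoOfFin_apply s h i).symm
  rw [this, OrderIso.symm_apply_apply]

lemma fiber_card {p n m' n' : ℕ} (S : Finset (Fin p)) (T : Finset (Fin n))
    (hS : S.card = m') (hT : T.card = n') (N : Fin m' → Fin n' → Bool) :
    (Finset.univ.filter fun M : Fin p → Fin n → Bool =>
      (fun i k => M (S.orderEmbOfFin hS i) (T.orderEmbOfFin hT k)) = N).card
      = 2 ^ (p * n - m' * n') := by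
  rw [← Fintype.card_subtype]
  have e : {M : Fin p → Fin n → Bool //
      (fun i k => M (S.orderEmbOfFin hS i) (T.orderEmbOfFin hT k)) = N}
      ≃ ({q : Fin p × Fin n // ¬ (q.1 ∈ S ∧ q.2 ∈ T)} → Bool) := by
    refine
      { toFun := fun M q => M.1 q.1.1 q.1.2
        invFun := fun g => ⟨fun i k =>
          if h : i ∈ S ∧ k ∈ T then
            N ((S.orderIsoOfFin hS).symm ⟨i, h.1⟩) ((T.orderIsoOfFin hT).symm ⟨k, h.2⟩)
          else g ⟨(i, k), h⟩, ?_⟩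
        left_inv := ?_
        right_inv := ?_ }
    · funext i k
      simp only [dif_pos (⟨S.orderEmbOfFin_mem hS i, T.orderEmbOfFin_mem hT k⟩ :
        S.orderEmbOfFin hS i ∈ S ∧ T.orderEmbOfFin hT k ∈ T), symm_emb]
    · rintro ⟨M, hM⟩
      apply Subtype.ext
      funext i k
      dsimp only
      split_ifs with h
      · have h2 : M (S.orderEmbOfFin hS ((S.orderIsoOfFin hS).symm ⟨i, h.1⟩))
            (T.orderEmbOfFin hT ((T.orderIsoOfFin hT).symm ⟨k, h.2⟩))
            = N ((S.orderIsoOfFin hS).symm ⟨i, h.1⟩) ((T.orderIsoOfFin hT).symm ⟨k, h.2⟩) :=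
          congrFun (congrFun hM ((S.orderIsoOfFin hS).symm ⟨i, h.1⟩))
            ((T.orderIsoOfFin hT).symm ⟨k, h.2⟩)
        rw [← h2, emb_symm, emb_symm]
      · rfl
    · intro g
      funext q
      obtain ⟨⟨i, k⟩, hq⟩ := q
      simp only [dif_neg hq]
  rw [Fintype.card_congr e, Fintype.card_fun, Fintype.card_bool]
  congr 1
  rw [Fintype.card_subtype_compl, Fintype.card_prod, Fintype.card_fin, Fintype.card_fin]
  congr 1
  rw [Fintype.card_congr (Equiv.subtypeProdEquivProd (p := (· ∈ S)) (q := (· ∈ T))),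
    Fintype.card_prod, Fintype.card_coe, Fintype.card_coe, hS, hT]

lemma filter_restrict_card {p n m' n' : ℕ} (S : Finset (Fin p)) (T : Finset (Fin n))
    (hS : S.card = m') (hT : T.card = n') (X : Finset (Fin m' → Fin n' → Bool)) :
    (Finset.univ.filter fun M : Fin p → Fin n → Bool =>
      (fun i k => M (S.orderEmbOfFin hS i) (T.orderEmbOfFin hT k)) ∈ X).card
      = X.card * 2 ^ (p * n - m' * n') := by
  classical
  rw [Finset.card_eq_sum_card_fiberwise
    (f := fun M : Fin p → Fin n → Bool =>
      (fun i k => M (S.orderEmbOfFin hS i) (T.orderEmbOfFin hT k)))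
    (s := Finset.univ.filter fun M : Fin p → Fin n → Bool =>
      (fun i k => M (S.orderEmbOfFin hS i) (T.orderEmbOfFin hT k)) ∈ X)
    (t := X) (fun M hM => Finset.mem_coe.mpr (Finset.mem_filter.mp (Finset.mem_coe.mp hM)).2)]
  rw [Finset.sum_congr rfl (fun N hN => ?_), Finset.sum_const, smul_eq_mul]
  rw [Finset.filter_filter]
  rw [Finset.filter_congr (q := fun M : Fin p → Fin n → Bool =>
      (fun i k => M (S.orderEmbOfFin hS i) (T.orderEmbOfFin hT k)) = N)
    (fun M _ => ⟨fun h => h.2, fun h => ⟨by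
      show (fun i k => M (S.orderEmbOfFin hS i) (T.orderEmbOfFin hT k)) ∈ X
      have h' : (fun i k => M (S.orderEmbOfFin hS i) (T.orderEmbOfFin hT k)) = N := h
      rw [h']; exact hN, h⟩⟩)]
  exact fiber_card S T hS hT N


lemma exists_cols {m n : ℕ} (hmn : m + 1 ≤ n) (u : Fin m → Fin n → ℝ)
    (hu : LinearIndependent ℝ u) :
    ∃ t : Fin (m + 1) → Fin n, Function.Injective t ∧
      LinearIndependent ℝ (fun i => fun k => u i (t k)) := by
  obtain ⟨t₀, ht₀inj, ht₀⟩ : ∃ t₀ : Fin m → Fin n, Function.Injective t₀ ∧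
      LinearIndependent ℝ (fun i => fun k => u i (t₀ k)) := by
    set c : Fin n → (Fin m → ℝ) := fun k i => u i k with hc
    have hrank : Module.finrank ℝ (Submodule.span ℝ (Set.range c)) = m := by
      have h1 : (Matrix.of u).rank = Fintype.card (Fin m) :=
        LinearIndependent.rank_matrix (M := Matrix.of u) hu
      have h2 := (Matrix.of u).rank_eq_finrank_span_cols
      have h3 : Set.range (Matrix.of u).col = Set.range c := rfl
      rw [h3] at h2
      rw [← h2, h1, Fintype.card_fin]
    have hspan : Submodule.span ℝ (Set.range c) = ⊤ := by
      apply Submodule.eq_top_of_finrank_eq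
      rw [hrank, Module.finrank_fin_fun]
    obtain ⟨b, hbsub, hbspan, hbli⟩ := exists_linearIndependent ℝ (Set.range c)
    rw [hspan] at hbspan
    have hble : ⊤ ≤ Submodule.span ℝ (Set.range ((↑) : b → (Fin m → ℝ))) := by
      rw [Subtype.range_coe, hbspan]
    let B := Module.Basis.mk hbli hble
    haveI : Fintype b := FiniteDimensional.fintypeBasisIndex B
    have hcardb : Fintype.card b = m := by
      have h5 := Module.finrank_eq_card_basis B
      rw [Module.finrank_fin_fun] at h5
      exact h5.symm
    have hg : ∀ v : b, ∃ k : Fin n, c k = v := fun v => hbsub v.2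
    choose g hgc using hg
    have hginj : Function.Injective g := fun v w h =>
      Subtype.ext (by rw [← hgc v, ← hgc w, h])
    let e : Fin m ≃ b := (Fintype.equivFinOfCardEq hcardb).symm
    refine ⟨fun i => g (e i), hginj.comp e.injective, ?_⟩
    have hcols : LinearIndependent ℝ (fun k : Fin m => c (g (e k))) := by
      have h4 : (fun k : Fin m => c (g (e k))) = (fun v : b => (v : Fin m → ℝ)) ∘ e := by
        funext k; simp [hgc]
      rw [h4]
      exact hbli.comp e e.injective
    have hcols' : LinearIndependent ℝ
        (fun k : Fin m => (Matrix.of (fun i k : Fin m => u i (g (e k)))).transpose k) := hcols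
    exact Matrix.linearIndependent_rows_iff_isUnit.mpr
      (Matrix.linearIndependent_cols_iff_isUnit.mp hcols')
  -- extend by one more column
  have hnsurj : ¬ Function.Surjective t₀ := by
    intro hs
    have := Fintype.card_le_of_surjective t₀ hs
    simp [Fintype.card_fin] at this
    omega
  rw [Function.Surjective] at hnsurj
  push_neg at hnsurj
  obtain ⟨k₀, hk₀⟩ := hnsurj
  refine ⟨(Fin.snoc t₀ k₀ : Fin (m + 1) → Fin n), ?_, ?_⟩
  · intro a b hab
    rcases Fin.eq_castSucc_or_eq_last a with ⟨a', rfl⟩ | rfl <;>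
      rcases Fin.eq_castSucc_or_eq_last b with ⟨b', rfl⟩ | rfl
    · rw [Fin.snoc_castSucc, Fin.snoc_castSucc] at hab
      exact congrArg Fin.castSucc (ht₀inj hab)
    · rw [Fin.snoc_castSucc, Fin.snoc_last] at hab
      exact absurd hab (hk₀ a')
    · rw [Fin.snoc_last, Fin.snoc_castSucc] at hab
      exact absurd hab.symm (hk₀ b')
    · rfl
  · apply LinearIndependent.of_comp (LinearMap.funLeft ℝ ℝ Fin.castSucc)
    have heq : ((LinearMap.funLeft ℝ ℝ Fin.castSucc) ∘ fun i k => u i ((Fin.snoc t₀ k₀ : Fin (m + 1) → Fin n) k))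
        = fun i k => u i (t₀ k) := by
      funext i k
      simp [LinearMap.funLeft, Fin.snoc_castSucc]
    rw [heq]
    exact ht₀

lemma mem_MmSet_sub {m p n : ℕ} (h4 : m + 1 ≤ n)
    {M : Fin p → Fin n → Bool} (hM : M ∈ MmSet m p n) :
    ∃ S : Finset (Fin p), ∃ T : Finset (Fin n), ∃ (hS : S.card = m) (hT : T.card = m + 1),
      (fun i k => M (S.orderEmbOfFin hS i) (T.orderEmbOfFin hT k)) ∈ MmSet m m (m + 1) := by
  rw [MmSet, Finset.mem_filter] at hM
  obtain ⟨-, hLI, j, hjinj, α, hα, hPM⟩ := hM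
  set S : Finset (Fin p) := Finset.univ.image j with hSdef
  have hS : S.card = m := by
    rw [hSdef, Finset.card_image_of_injective _ hjinj, Finset.card_univ, Fintype.card_fin]
  set eS := S.orderEmbOfFin hS with heS
  have huLI : LinearIndependent ℝ (fun i => signVec (M (eS i))) :=
    hLI.comp eS eS.injective
  obtain ⟨t, htinj, htLI⟩ := exists_cols h4 (fun i => signVec (M (eS i))) huLI
  set T : Finset (Fin n) := Finset.univ.image t with hTdef
  have hT : T.card = m + 1 := by
    rw [hTdef, Finset.card_image_of_injective _ htinj, Finset.card_univ, Fintype.card_fin]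
  set eT := T.orderEmbOfFin hT with heT
  refine ⟨S, T, hS, hT, ?_⟩
  rw [MmSet, Finset.mem_filter]
  have hmemS : ∀ i, j i ∈ S := fun i => by
    rw [hSdef]; exact Finset.mem_image_of_mem j (Finset.mem_univ i)
  set j' : Fin m → Fin m := fun i => (S.orderIsoOfFin hS).symm ⟨j i, hmemS i⟩ with hj'
  have hjS : ∀ i, eS (j' i) = j i := fun i => emb_symm S hS _ _
  refine ⟨Finset.mem_univ _, ?_, j', ?_, α, hα, ?_⟩
  · -- rows linearly independent
    show LinearIndependent ℝ (fun i => signVec (fun k => M (eS i) (eT k)))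
    have key : LinearIndependent ℝ (fun i => fun k => signVec (M (eS i)) (eT k)) := by
      have hmemT : ∀ k, t k ∈ T := fun k => by
        rw [hTdef]; exact Finset.mem_image_of_mem t (Finset.mem_univ k)
      set π : Fin (m + 1) → Fin (m + 1) :=
        fun k => (T.orderIsoOfFin hT).symm ⟨t k, hmemT k⟩ with hπ
      have hπt : ∀ k, eT (π k) = t k := fun k => emb_symm T hT _ _
      apply LinearIndependent.of_comp (LinearMap.funLeft ℝ ℝ π)
      have heq : ((LinearMap.funLeft ℝ ℝ π) ∘ fun i => fun k => signVec (M (eS i)) (eT k))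
          = fun i => fun k => signVec (M (eS i)) (t k) := by
        funext i k
        simp [LinearMap.funLeft, hπt k]
      rw [heq]
      exact htLI
    exact key
  · -- j' injective
    intro a b hab
    have h5 := congrArg eS hab
    rw [hjS a, hjS b] at h5
    exact hjinj h5
  · -- PM event
    have hrow : ∀ i, signVec ((fun i k => M (eS i) (eT k)) (j' i))
        = fun k => signVec (M (j i)) (eT k) := by
      intro i; funext k
      show (if M (eS (j' i)) (eT k) then (1:ℝ) else -1) = _
      rw [hjS i]; rfl
    intro k
    have hcalc : (∑ i, α i • signVec ((fun i k => M (eS i) (eT k)) (j' i))) k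
        = (∑ i, α i • signVec (M (j i))) (eT k) := by
      rw [Finset.sum_apply, Finset.sum_apply]
      refine Finset.sum_congr rfl fun i _ => ?_
      simp only [Pi.smul_apply, smul_eq_mul, hrow i]
    rw [hcalc]
    exact hPM (eT k)

/-- for `1 ≤ m ≤ p ≤ n` with `m + 1 ≤ n`,
`R_m(p,n) ≤ C(p,m) C(n,m+1) R_m(m, m+1)`. -/
theorem stmt18 (m p n : ℕ) (h1 : 1 ≤ m) (h2 : m ≤ p) (h3 : p ≤ n) (h4 : m + 1 ≤ n) :
    Rm m p n ≤ (p.choose m : ℝ) * (n.choose (m + 1) : ℝ) * Rm m m (m + 1) := by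
  classical
  have hcount : (MmSet m p n).card
      ≤ p.choose m * (n.choose (m + 1)) * ((MmSet m m (m + 1)).card * 2 ^ (p * n - m * (m + 1))) := by
    have hsub : MmSet m p n ⊆ (Finset.univ.powersetCard m).biUnion fun S =>
        (Finset.univ.powersetCard (m + 1)).biUnion fun T =>
          Finset.univ.filter (fun M : Fin p → Fin n → Bool =>
            ∃ (hS : S.card = m) (hT : T.card = m + 1),
              (fun i k => M (S.orderEmbOfFin hS i) (T.orderEmbOfFin hT k)) ∈ MmSet m m (m + 1)) := by
      intro M hM
      obtain ⟨S, T, hS, hT, h⟩ := mem_MmSet_sub h4 hM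
      refine Finset.mem_biUnion.mpr ⟨S, ?_, Finset.mem_biUnion.mpr ⟨T, ?_, ?_⟩⟩
      · exact Finset.mem_powersetCard.mpr ⟨Finset.subset_univ _, hS⟩
      · exact Finset.mem_powersetCard.mpr ⟨Finset.subset_univ _, hT⟩
      · exact Finset.mem_filter.mpr ⟨Finset.mem_univ _, hS, hT, h⟩
    calc (MmSet m p n).card ≤ _ := Finset.card_le_card hsub
    _ ≤ ∑ S ∈ Finset.univ.powersetCard m,
          ((Finset.univ.powersetCard (m + 1)).biUnion fun T =>
            Finset.univ.filter (fun M : Fin p → Fin n → Bool =>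
              ∃ (hS : S.card = m) (hT : T.card = m + 1),
                (fun i k => M (S.orderEmbOfFin hS i) (T.orderEmbOfFin hT k)) ∈ MmSet m m (m + 1))).card :=
        Finset.card_biUnion_le
    _ ≤ ∑ S ∈ Finset.univ.powersetCard m, ∑ T ∈ Finset.univ.powersetCard (m + 1),
          (Finset.univ.filter (fun M : Fin p → Fin n → Bool =>
              ∃ (hS : S.card = m) (hT : T.card = m + 1),
                (fun i k => M (S.orderEmbOfFin hS i) (T.orderEmbOfFin hT k)) ∈ MmSet m m (m + 1))).card :=
        Finset.sum_le_sum fun S _ => Finset.card_biUnion_le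
    _ ≤ ∑ _S ∈ Finset.univ.powersetCard (m) (α := Fin p), ∑ _T ∈ Finset.univ.powersetCard (m + 1) (α := Fin n),
          (MmSet m m (m + 1)).card * 2 ^ (p * n - m * (m + 1)) := by
        refine Finset.sum_le_sum fun S hSmem => Finset.sum_le_sum fun T hTmem => ?_
        have hS : S.card = m := (Finset.mem_powersetCard.mp hSmem).2
        have hT : T.card = m + 1 := (Finset.mem_powersetCard.mp hTmem).2
        have hfil : Finset.univ.filter (fun M : Fin p → Fin n → Bool =>
              ∃ (hS : S.card = m) (hT : T.card = m + 1),
                (fun i k => M (S.orderEmbOfFin hS i) (T.orderEmbOfFin hT k)) ∈ MmSet m m (m + 1))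
            = Finset.univ.filter (fun M : Fin p → Fin n → Bool =>
                (fun i k => M (S.orderEmbOfFin hS i) (T.orderEmbOfFin hT k)) ∈ MmSet m m (m + 1)) := by
          apply Finset.filter_congr
          intro M _
          exact ⟨fun ⟨_, _, h⟩ => h, fun h => ⟨hS, hT, h⟩⟩
        rw [hfil, filter_restrict_card S T hS hT]
    _ = _ := by
        simp only [Finset.sum_const, smul_eq_mul, Finset.card_powersetCard,
          Finset.card_univ, Fintype.card_fin]
        ring
  have hle : m * (m + 1) ≤ p * n := Nat.mul_le_mul h2 h4
  unfold Rm
  rw [div_le_iff₀ (by positivity : (0:ℝ) < 2 ^ (p * n))]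
  have hpow : (2:ℝ) ^ (p * n - m * (m + 1)) * 2 ^ (m * (m + 1)) = 2 ^ (p * n) := by
    rw [← pow_add, Nat.sub_add_cancel hle]
  have hr : (p.choose m : ℝ) * (n.choose (m + 1) : ℝ)
        * (((MmSet m m (m + 1)).card : ℝ) / 2 ^ (m * (m + 1))) * 2 ^ (p * n)
      = (p.choose m : ℝ) * (n.choose (m + 1) : ℝ)
        * (((MmSet m m (m + 1)).card : ℝ) * 2 ^ (p * n - m * (m + 1))) := by
    rw [← hpow]; field_simp
  rw [hr]
  calc ((MmSet m p n).card : ℝ)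
      ≤ ((p.choose m * (n.choose (m + 1)) * ((MmSet m m (m + 1)).card * 2 ^ (p * n - m * (m + 1))) : ℕ) : ℝ) := by
        exact_mod_cast hcount
    _ = _ := by push_cast; ring
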